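/- Partial inversion is exchangeable with selecting a submatrix: for a square matrix F with all principal submatrices invertible, disjoint sets a, b ⊆ V and J = a ∪ b, the (J,J)-submatrix of inv_a F equals inv_a applied to the submatrix F_{JJ}: [inv_a F]_{J,J} = inv_a (F_{JJ}). -/

import Mathlib

open Matrix

/-- Partial inversion on the first block of a 2×2 block matrix. -/
noncomputable def pinvBlocks {α β : Type*} [Fintype α] [Fintype β] [DecidableEq α] [DecidableEq β]
    (M : Matrix (α ⊕ β) (α ⊕ β) ℝ) : Matrix (α ⊕ β) (α ⊕ β) ℝ :=
  Matrix.fromBlocks (M.toBlocks₁₁)⁻¹ (-((M.toBlocks₁₁)⁻¹ * M.toBlocks₁₂))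
    (M.toBlocks₂₁ * (M.toBlocks₁₁)⁻¹)
    (M.toBlocks₂₂ - M.toBlocks₂₁ * (M.toBlocks₁₁)⁻¹ * M.toBlocks₁₂)

/-- Partial inversion of a matrix on the index set `{i | p i}`. -/
noncomputable def pinv {n : Type*} [Fintype n] [DecidableEq n]
    (p : n → Prop) [DecidablePred p] (F : Matrix n n ℝ) : Matrix n n ℝ :=
  (pinvBlocks (F.submatrix (Equiv.sumCompl p) (Equiv.sumCompl p))).submatrix
    (Equiv.sumCompl p).symm (Equiv.sumCompl p).symm

section helpers

variable {n : Type*} [Fintype n] [DecidableEq n] (p : n → Prop) [DecidablePred p]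
  (F : Matrix n n ℝ)

lemma pinv_blk11 : (F.submatrix (Equiv.sumCompl p) (Equiv.sumCompl p)).toBlocks₁₁
    = F.submatrix (Subtype.val : {i // p i} → n) Subtype.val := by
  ext i j; simp [Matrix.toBlocks₁₁]

lemma pinv_pos_pos {i j : n} (hi : p i) (hj : p j) :
    pinv p F i j
      = (F.submatrix (Subtype.val : {i // p i} → n) Subtype.val)⁻¹ ⟨i, hi⟩ ⟨j, hj⟩ := by
  rw [pinv]
  simp only [Matrix.submatrix_apply, Equiv.sumCompl_symm_apply_of_pos hi,
    Equiv.sumCompl_symm_apply_of_pos hj, pinvBlocks, Matrix.fromBlocks_apply₁₁,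
    pinv_blk11]

lemma pinv_pos_neg {i j : n} (hi : p i) (hj : ¬ p j) :
    pinv p F i j
      = -(∑ k : {i // p i},
          (F.submatrix (Subtype.val : {i // p i} → n) Subtype.val)⁻¹ ⟨i, hi⟩ k
            * F k.val j) := by
  rw [pinv]
  simp only [Matrix.submatrix_apply, Equiv.sumCompl_symm_apply_of_pos hi,
    Equiv.sumCompl_symm_apply_of_neg hj, pinvBlocks, Matrix.fromBlocks_apply₁₂,
    pinv_blk11]
  simp [Matrix.mul_apply, Matrix.toBlocks₁₂]

lemma pinv_neg_pos {i j : n} (hi : ¬ p i) (hj : p j) :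
    pinv p F i j
      = ∑ k : {i // p i},
          F i k.val * (F.submatrix (Subtype.val : {i // p i} → n) Subtype.val)⁻¹ k ⟨j, hj⟩ := by
  rw [pinv]
  simp only [Matrix.submatrix_apply, Equiv.sumCompl_symm_apply_of_neg hi,
    Equiv.sumCompl_symm_apply_of_pos hj, pinvBlocks, Matrix.fromBlocks_apply₂₁,
    pinv_blk11]
  simp [Matrix.mul_apply, Matrix.toBlocks₂₁]

lemma pinv_neg_neg {i j : n} (hi : ¬ p i) (hj : ¬ p j) :
    pinv p F i j
      = F i j - ∑ k : {i // p i}, (∑ l : {i // p i},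
          F i l.val * (F.submatrix (Subtype.val : {i // p i} → n) Subtype.val)⁻¹ l k)
            * F k.val j := by
  rw [pinv]
  simp only [Matrix.submatrix_apply, Equiv.sumCompl_symm_apply_of_neg hi,
    Equiv.sumCompl_symm_apply_of_neg hj, pinvBlocks, Matrix.fromBlocks_apply₂₂,
    pinv_blk11]
  simp [Matrix.mul_apply, Matrix.toBlocks₂₁, Matrix.toBlocks₁₂, Matrix.toBlocks₂₂,
    Matrix.sub_apply]

end helpers

/-- Partial inversion is exchangeable with selecting a submatrix:
`[inv_a F]_{J,J} = inv_a (F_{J,J})` for `J = a ∪ b`, `a` and `b` disjoint. -/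
theorem partial_inversion_submatrix
    {n : Type*} [Fintype n] [DecidableEq n]
    (F : Matrix n n ℝ)
    (hprin : ∀ (q : n → Prop) [DecidablePred q],
      IsUnit (F.submatrix (Subtype.val : {i // q i} → n) Subtype.val).det)
    (a b : Finset n) (hab : Disjoint a b) :
    (pinv (· ∈ a) F).submatrix (Subtype.val : {i // i ∈ a ∪ b} → n) Subtype.val
      = pinv (fun i : {i // i ∈ a ∪ b} => (i : n) ∈ a)
          (F.submatrix (Subtype.val : {i // i ∈ a ∪ b} → n) Subtype.val) := by
  set J := {i // i ∈ a ∪ b}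
  letI instA : Fintype {i // i ∈ a} := Subtype.fintype _
  letI instA' : Fintype {x : J // (x : n) ∈ a} := Subtype.fintype _
  set G : Matrix J J ℝ := F.submatrix Subtype.val Subtype.val with hG
  -- the equivalence between the two index types for the `a` block
  let φ : {x : J // (x : n) ∈ a} ≃ {i // i ∈ a} :=
    { toFun := fun x => ⟨x.val.val, x.prop⟩
      invFun := fun i => ⟨⟨i.val, Finset.mem_union_left _ i.prop⟩, i.prop⟩
      left_inv := fun x => rfl
      right_inv := fun i => rfl }
  have hGsub : G.submatrix (Subtype.val : {x : J // (x : n) ∈ a} → J) Subtype.val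
      = (F.submatrix (Subtype.val : {i // i ∈ a} → n) Subtype.val).submatrix φ φ := by
    ext k l; rfl
  have hinv : (G.submatrix (Subtype.val : {x : J // (x : n) ∈ a} → J) Subtype.val)⁻¹
      = ((F.submatrix (Subtype.val : {i // i ∈ a} → n) Subtype.val)⁻¹).submatrix φ φ := by
    rw [hGsub, Matrix.inv_submatrix_equiv]
  ext ⟨i, hi⟩ ⟨j, hj⟩
  simp only [Matrix.submatrix_apply]
  by_cases hia : i ∈ a <;> by_cases hja : j ∈ a
  · rw [pinv_pos_pos _ F hia hja,
      pinv_pos_pos (fun i : J => (i : n) ∈ a) G (i := ⟨i, hi⟩) (j := ⟨j, hj⟩) hia hja, hinv]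
    rfl
  · rw [pinv_pos_neg _ F hia hja,
      pinv_pos_neg (fun i : J => (i : n) ∈ a) G (i := ⟨i, hi⟩) (j := ⟨j, hj⟩) hia hja, hinv]
    congr 1
    exact (Fintype.sum_equiv φ _ _ (fun k => rfl)).symm
  · rw [pinv_neg_pos _ F hia hja,
      pinv_neg_pos (fun i : J => (i : n) ∈ a) G (i := ⟨i, hi⟩) (j := ⟨j, hj⟩) hia hja, hinv]
    exact (Fintype.sum_equiv φ _ _ (fun k => rfl)).symm
  · rw [pinv_neg_neg _ F hia hja,
      pinv_neg_neg (fun i : J => (i : n) ∈ a) G (i := ⟨i, hi⟩) (j := ⟨j, hj⟩) hia hja, hinv]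
    congr 1
    refine (Fintype.sum_equiv φ _ _ (fun k => ?_)).symm
    congr 1
    exact Fintype.sum_equiv φ _ _ (fun l => rfl)
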